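/- The coefficients of the first fundamental form of the surface of osculating circles X(s,u) are E = (1/2)(2 + 8r²τ² sin⁴(u/2) + 4r' sin u + 4r'²(1 - cos u)), F = r(1 + r' sin u), G = r², and consequently √(EG - F²) = 2r √(r²τ² + r'²) sin²(u/2). -/

import Mathlib

open Real

noncomputable section

/-- Euclidean dot product on ℝ³. -/
def dot3 (a b : Fin 3 → ℝ) : ℝ := a 0 * b 0 + a 1 * b 1 + a 2 * b 2

/-- Cross product on ℝ³. -/
def cross3 (a b : Fin 3 → ℝ) : Fin 3 → ℝ :=
  ![a 1 * b 2 - a 2 * b 1, a 2 * b 0 - a 0 * b 2, a 0 * b 1 - a 1 * b 0]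

/-- Euclidean norm on ℝ³. -/
def norm3 (a : Fin 3 → ℝ) : ℝ := Real.sqrt (dot3 a a)

/-- Scalar triple product: determinant of the three vectors. -/
def det3 (a b c : Fin 3 → ℝ) : ℝ := dot3 a (cross3 b c)

lemma dot_comb (T N B : Fin 3 → ℝ) (a b c a' b' c' : ℝ)
    (hTT : dot3 T T = 1) (hNN : dot3 N N = 1) (hBB : dot3 B B = 1)
    (hTN : dot3 T N = 0) (hTB : dot3 T B = 0) (hNB : dot3 N B = 0) :
    dot3 (a • T + b • N + c • B) (a' • T + b' • N + c' • B) = a*a' + b*b' + c*c' := by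
  simp only [dot3, Pi.add_apply, Pi.smul_apply, smul_eq_mul] at *
  linear_combination a*a'*hTT + b*b'*hNN + c*c'*hBB + (a*b'+a'*b)*hTN + (a*c'+a'*c)*hTB + (b*c'+b'*c)*hNB

lemma cross_self_dot (T N : Fin 3 → ℝ) :
    dot3 T (cross3 T N) = 0 ∧ dot3 N (cross3 T N) = 0 := by
  constructor <;> (simp [dot3, cross3]; ring)

lemma cross_norm (T N : Fin 3 → ℝ) (hTT : dot3 T T = 1) (hNN : dot3 N N = 1)
    (hTN : dot3 T N = 0) : dot3 (cross3 T N) (cross3 T N) = 1 := by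
  simp only [dot3, cross3, Matrix.cons_val_zero, Matrix.cons_val_one, Matrix.head_cons,
    Matrix.cons_val_two, Matrix.tail_cons] at *
  linear_combination (N 0^2 + N 1^2 + N 2^2) * hTT + hNN - (T 0*N 0 + T 1*N 1 + T 2*N 2) * hTN

/-- The coefficients of the first fundamental form of the surface
of osculating circles, and the area element `√(EG - F²)`. -/
theorem stmt_8
    (α T N B : ℝ → Fin 3 → ℝ) (κ τ r r' : ℝ → ℝ)
    (hκ : ∀ s, 0 < κ s)
    (hr : ∀ s, r s = (κ s)⁻¹)
    -- Frenet frame and Frenet equations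
    (hTT : ∀ s, dot3 (T s) (T s) = 1)
    (hNN : ∀ s, dot3 (N s) (N s) = 1)
    (hTN : ∀ s, dot3 (T s) (N s) = 0)
    (hB : ∀ s, B s = cross3 (T s) (N s))
    (hα : ∀ s, HasDerivAt α (T s) s)
    (hT : ∀ s, HasDerivAt T (κ s • N s) s)
    (hN : ∀ s, HasDerivAt N ((-κ s) • T s + τ s • B s) s)
    (hB' : ∀ s, HasDerivAt B ((-τ s) • N s) s)
    (hr' : ∀ s, HasDerivAt r (r' s) s)
    -- the surface of osculating circles and its partial derivatives
    (X Xs Xu : ℝ → ℝ → Fin 3 → ℝ)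
    (hX : ∀ s u, X s u = α s + r s • (Real.sin u • T s + (1 - Real.cos u) • N s))
    (hXs : ∀ s u, HasDerivAt (fun t => X t u) (Xs s u) s)
    (hXu : ∀ s u, HasDerivAt (fun w => X s w) (Xu s u) u)
    :
    ∀ s u,
      dot3 (Xs s u) (Xs s u) =
        (1 / 2) * (2 + 8 * (r s) ^ 2 * (τ s) ^ 2 * Real.sin (u / 2) ^ 4
          + 4 * r' s * Real.sin u + 4 * (r' s) ^ 2 * (1 - Real.cos u))
      ∧ dot3 (Xs s u) (Xu s u) = r s * (1 + r' s * Real.sin u)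
      ∧ dot3 (Xu s u) (Xu s u) = (r s) ^ 2
      ∧ Real.sqrt (dot3 (Xs s u) (Xs s u) * dot3 (Xu s u) (Xu s u)
            - dot3 (Xs s u) (Xu s u) ^ 2)
          = 2 * r s * Real.sqrt ((r s) ^ 2 * (τ s) ^ 2 + (r' s) ^ 2)
              * Real.sin (u / 2) ^ 2 := by
  intro s u
  have hrpos : 0 < r s := by rw [hr]; exact inv_pos.mpr (hκ s)
  have hrκ : r s * κ s = 1 := by
    rw [hr]; exact inv_mul_cancel₀ (ne_of_gt (hκ s))
  -- dot products of the frame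
  have hBB : dot3 (B s) (B s) = 1 := by
    rw [hB]; exact cross_norm _ _ (hTT s) (hNN s) (hTN s)
  have hTB : dot3 (T s) (B s) = 0 := by rw [hB]; exact (cross_self_dot _ _).1
  have hNB : dot3 (N s) (B s) = 0 := by rw [hB]; exact (cross_self_dot _ _).2
  -- compute Xs
  have hXs' : HasDerivAt (fun t => X t u)
      (T s + (r s • (Real.sin u • (κ s • N s)
        + (1 - Real.cos u) • ((-κ s) • T s + τ s • B s))
        + r' s • (Real.sin u • T s + (1 - Real.cos u) • N s))) s := by
    have inner : HasDerivAt (fun t => Real.sin u • T t + (1 - Real.cos u) • N t)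
        (Real.sin u • (κ s • N s) + (1 - Real.cos u) • ((-κ s) • T s + τ s • B s)) s :=
      ((hT s).const_smul (Real.sin u)).add ((hN s).const_smul (1 - Real.cos u))
    have := (hα s).add ((hr' s).smul inner)
    rw [show (fun t => X t u) = _ from funext fun t => hX t u]; exact this
  have hXsval : Xs s u = (Real.cos u + r' s * Real.sin u) • T s
      + (Real.sin u + r' s * (1 - Real.cos u)) • N s
      + (r s * τ s * (1 - Real.cos u)) • B s := by
    rw [(hXs s u).unique hXs']
    funext i
    simp only [Pi.add_apply, Pi.smul_apply, smul_eq_mul, Pi.neg_apply]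
    linear_combination (Real.sin u * N s i - (1 - Real.cos u) * T s i) * hrκ
  -- compute Xu
  have hXu' : HasDerivAt (fun w => X s w)
      (r s • (Real.cos u • T s + Real.sin u • N s)) u := by
    have h1 : HasDerivAt (fun w : ℝ => 1 - Real.cos w) (Real.sin u) u := by
      simpa using (Real.hasDerivAt_cos u).const_sub 1
    have inner : HasDerivAt (fun w => Real.sin w • T s + (1 - Real.cos w) • N s)
        (Real.cos u • T s + Real.sin u • N s) u :=
      ((Real.hasDerivAt_sin u).smul_const (T s)).add (h1.smul_const (N s))
    have := (hasDerivAt_const u (α s)).add (inner.const_smul (r s))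
    rw [zero_add] at this
    rw [show (fun w => X s w) = _ from funext fun w => hX s w]; exact this
  have hXuval : Xu s u = (r s * Real.cos u) • T s + (r s * Real.sin u) • N s
      + (0 : ℝ) • B s := by
    rw [(hXu s u).unique hXu']
    funext i
    simp only [Pi.add_apply, Pi.smul_apply, smul_eq_mul]
    ring
  -- trig identities
  have hpy : Real.sin u ^ 2 + Real.cos u ^ 2 = 1 := Real.sin_sq_add_cos_sq u
  have hhalf : Real.cos u = 1 - 2 * Real.sin (u / 2) ^ 2 := by
    have h2 := Real.cos_two_mul (u / 2)
    have h3 := Real.sin_sq_add_cos_sq (u / 2)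
    rw [show 2 * (u / 2) = u by ring] at h2
    linear_combination h2 + 2 * h3
  -- the three coefficients
  have hE : dot3 (Xs s u) (Xs s u) =
      (1 / 2) * (2 + 8 * (r s) ^ 2 * (τ s) ^ 2 * Real.sin (u / 2) ^ 4
        + 4 * r' s * Real.sin u + 4 * (r' s) ^ 2 * (1 - Real.cos u)) := by
    rw [hXsval, dot_comb _ _ _ _ _ _ _ _ _ (hTT s) (hNN s) hBB (hTN s) hTB hNB]
    linear_combination (1 + r' s ^ 2) * hpy
      - (r s)^2 * (τ s)^2 * (1 - Real.cos u + 2 * Real.sin (u/2)^2) * hhalf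
  have hF : dot3 (Xs s u) (Xu s u) = r s * (1 + r' s * Real.sin u) := by
    rw [hXsval, hXuval, dot_comb _ _ _ _ _ _ _ _ _ (hTT s) (hNN s) hBB (hTN s) hTB hNB]
    linear_combination (r s) * hpy
  have hG : dot3 (Xu s u) (Xu s u) = (r s) ^ 2 := by
    rw [hXuval, dot_comb _ _ _ _ _ _ _ _ _ (hTT s) (hNN s) hBB (hTN s) hTB hNB]
    linear_combination (r s)^2 * hpy
  refine ⟨hE, hF, hG, ?_⟩
  rw [hE, hF, hG]
  have key : (1 / 2) * (2 + 8 * (r s) ^ 2 * (τ s) ^ 2 * Real.sin (u / 2) ^ 4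
        + 4 * r' s * Real.sin u + 4 * (r' s) ^ 2 * (1 - Real.cos u)) * (r s) ^ 2
      - (r s * (1 + r' s * Real.sin u)) ^ 2
      = (2 * r s * Real.sin (u / 2) ^ 2) ^ 2 * ((r s) ^ 2 * (τ s) ^ 2 + (r' s) ^ 2) := by
    linear_combination (- (r s)^2 * (r' s)^2 * (1 - Real.cos u + 2 * Real.sin (u/2)^2)) * hhalf
      - (r s)^2 * (r' s)^2 * hpy
  rw [key, Real.sqrt_mul (sq_nonneg _),
    Real.sqrt_sq (by positivity : (0:ℝ) ≤ 2 * r s * Real.sin (u / 2) ^ 2)]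
  ring
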